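/- (Differentiation identity for the functions f_j.) For every integer j ≥ 1 and every real constant c, the map λ ↦ λ^j f_j(λ c) is differentiable on ℝ and (d/dλ) { λ^j f_j(λ c) } = λ^{j−1} f_{j−1}(λ c). -/

import Mathlib

open Real

/-- `f k u = ∑_{j=0}^∞ u^j / (j+k)!`. -/
noncomputable def fSeries (k : ℕ) (u : ℝ) : ℝ := ∑' j : ℕ, u ^ j / (Nat.factorial (j + k) : ℝ)

lemma summable_fSeries (k : ℕ) (u : ℝ) :
    Summable (fun n : ℕ => u ^ n / (Nat.factorial (n + k) : ℝ)) := by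
  apply Summable.of_norm
  have hle : ∀ n : ℕ, ‖u ^ n / (Nat.factorial (n + k) : ℝ)‖ ≤ |u| ^ n / (Nat.factorial n : ℝ) := by
    intro n
    rw [norm_div, norm_pow, Real.norm_eq_abs u, Real.norm_natCast]
    have h0 : (0:ℝ) < (Nat.factorial n : ℝ) := by exact_mod_cast Nat.factorial_pos n
    gcongr
    exact Nat.le_add_right n k
  exact Summable.of_nonneg_of_le (fun n => norm_nonneg _) hle (Real.summable_pow_div_factorial |u|)

lemma pow_mul_fSeries (k : ℕ) (u : ℝ) :
    u ^ k * fSeries k u = Real.exp u - ∑ m ∈ Finset.range k, u ^ m / (Nat.factorial m : ℝ) := by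
  have hexp : Real.exp u = ∑' n : ℕ, u ^ n / (Nat.factorial n : ℝ) := by
    rw [Real.exp_eq_exp_ℝ, NormedSpace.exp_eq_tsum_div]
  have hsum : Summable (fun n : ℕ => u ^ n / (Nat.factorial n : ℝ)) := by
    simpa using summable_fSeries 0 u
  have htail := Summable.sum_add_tsum_nat_add (f := fun n : ℕ => u ^ n / (Nat.factorial n : ℝ)) k hsum
  have h1 : u ^ k * fSeries k u = ∑' n : ℕ, u ^ (n + k) / (Nat.factorial (n + k) : ℝ) := by
    rw [fSeries, ← tsum_mul_left]
    congr 1; funext n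
    rw [pow_add, mul_comm (u ^ n), mul_div_assoc]
  rw [h1, hexp]
  linarith [htail]

lemma fSeries_zero_arg (k : ℕ) : fSeries k 0 = 1 / (Nat.factorial k : ℝ) := by
  rw [fSeries, tsum_eq_single 0]
  · simp
  · intro n hn
    simp [zero_pow hn]

/-- **Differentiation identity for the functions `f_j`.** For every integer `j ≥ 1` and every
real constant `c`, the map `λ ↦ λ^j f_j(λ c)` is differentiable on `ℝ` with
`(d/dλ) {λ^j f_j(λ c)} = λ^{j−1} f_{j−1}(λ c)`. -/
theorem hasDerivAt_pow_mul_fSeries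
    (j : ℕ) (hj : 1 ≤ j) (c : ℝ) (l : ℝ) :
    HasDerivAt (fun x : ℝ => x ^ j * fSeries j (x * c))
      (l ^ (j - 1) * fSeries (j - 1) (l * c)) l := by
  obtain ⟨m, rfl⟩ := Nat.exists_eq_add_of_le' hj
  simp only [Nat.add_sub_cancel]
  rcases eq_or_ne c 0 with rfl | hc
  · simp only [mul_zero, fSeries_zero_arg]
    have h := (hasDerivAt_pow (m + 1) l).mul_const (1 / (Nat.factorial (m + 1) : ℝ))
    refine h.congr_deriv ?_
    simp only [Nat.add_sub_cancel, Nat.factorial_succ]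
    have hfm : (Nat.factorial m : ℝ) ≠ 0 := by positivity
    push_cast
    field_simp
  · -- c ≠ 0
    have key : ∀ x : ℝ, x ^ (m + 1) * fSeries (m + 1) (x * c)
        = c⁻¹ ^ (m + 1) * (Real.exp (x * c)
          - ∑ i ∈ Finset.range (m + 1), (x * c) ^ i / (Nat.factorial i : ℝ)) := by
      intro x
      rw [← pow_mul_fSeries (m + 1) (x * c), mul_pow]
      have hcc : c ^ (m + 1) * c⁻¹ ^ (m + 1) = 1 := by rw [← mul_pow, mul_inv_cancel₀ hc, one_pow]
      linear_combination (-(x ^ (m + 1) * fSeries (m + 1) (x * c))) * hcc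
    have hh : HasDerivAt (fun x : ℝ => c⁻¹ ^ (m + 1) * (Real.exp (x * c)
          - ∑ i ∈ Finset.range (m + 1), (x * c) ^ i / (Nat.factorial i : ℝ)))
        (c⁻¹ ^ (m + 1) * (c * Real.exp (l * c)
          - ∑ i ∈ Finset.range (m + 1),
              (i : ℝ) * l ^ (i - 1) * c ^ i / (Nat.factorial i : ℝ))) l := by
      apply HasDerivAt.const_mul
      apply HasDerivAt.sub
      · have := (Real.hasDerivAt_exp (l * c)).comp l ((hasDerivAt_id l).mul_const c)
        simpa [Function.comp_def, mul_comm] using this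
      · apply HasDerivAt.fun_sum
        intro i _
        have h2 : HasDerivAt (fun x : ℝ => x ^ i * c ^ i / (Nat.factorial i : ℝ))
            ((i : ℝ) * l ^ (i - 1) * c ^ i / (Nat.factorial i : ℝ)) l := by
          simpa [mul_div_assoc] using
            ((hasDerivAt_pow i l).mul_const (c ^ i)).div_const (Nat.factorial i : ℝ)
        simpa only [mul_pow] using h2
    have heq : (fun x : ℝ => x ^ (m + 1) * fSeries (m + 1) (x * c))
        = fun x : ℝ => c⁻¹ ^ (m + 1) * (Real.exp (x * c)
          - ∑ i ∈ Finset.range (m + 1), (x * c) ^ i / (Nat.factorial i : ℝ)) := funext key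
    rw [heq]
    convert hh using 1
    have hsum : ∑ i ∈ Finset.range (m + 1), (i : ℝ) * l ^ (i - 1) * c ^ i / (Nat.factorial i : ℝ)
        = c * ∑ i ∈ Finset.range m, (l * c) ^ i / (Nat.factorial i : ℝ) := by
      rw [Finset.sum_range_succ', Finset.mul_sum]
      have hterm : ∀ i ∈ Finset.range m,
          ((i : ℕ) + 1 : ℝ) * l ^ (i + 1 - 1) * c ^ (i + 1) / (Nat.factorial (i + 1) : ℝ)
          = c * ((l * c) ^ i / (Nat.factorial i : ℝ)) := by
        intro i _
        have hfi : ((Nat.factorial i : ℝ)) ≠ 0 := by positivity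
        rw [Nat.factorial_succ]
        push_cast
        have hi1 : ((i : ℝ) + 1) ≠ 0 := by positivity
        field_simp
        ring
      rw [Finset.sum_congr rfl (fun i hi => by exact_mod_cast hterm i hi)]
      simp
    have hpow : l ^ m * fSeries m (l * c)
        = c⁻¹ ^ m * (Real.exp (l * c)
          - ∑ i ∈ Finset.range m, (l * c) ^ i / (Nat.factorial i : ℝ)) := by
      rw [← pow_mul_fSeries m (l * c), mul_pow]
      have hcc : c ^ m * c⁻¹ ^ m = 1 := by rw [← mul_pow, mul_inv_cancel₀ hc, one_pow]
      linear_combination (-(l ^ m * fSeries m (l * c))) * hcc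
    rw [hpow, hsum, pow_succ]
    field_simp
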